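/- For every complex number z, |sin(|z|)| ≤ |sin(z)| ≤ sinh(|z|). -/

import Mathlib

lemma abs_sin_sq_aux (x y : ℝ) :
    ‖Complex.sin ((x : ℂ) + (y : ℂ) * Complex.I)‖ ^ 2 =
      Real.sin x ^ 2 + Real.sinh y ^ 2 := by
  rw [Complex.sin_add_mul_I, ← Complex.ofReal_sin, ← Complex.ofReal_cosh,
    ← Complex.ofReal_cos, ← Complex.ofReal_sinh, ← Complex.ofReal_mul, ← Complex.ofReal_mul,
    Complex.sq_norm, Complex.normSq_add_mul_I]
  have h1 := Real.sin_sq_add_cos_sq x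
  have h2 := Real.cosh_sq y
  nlinarith

lemma abs_sin_sq (z : ℂ) :
    ‖Complex.sin z‖ ^ 2 = Real.sin z.re ^ 2 + Real.sinh z.im ^ 2 := by
  have := abs_sin_sq_aux z.re z.im
  rwa [Complex.re_add_im] at this

set_option maxHeartbeats 1000000 in
/-- For every complex number `z`, `|sin(|z|)| ≤ |sin z| ≤ sinh(|z|)`. -/
theorem abs_sin_le_abs_complex_sin_le_sinh (z : ℂ) :
    |Real.sin (‖z‖)| ≤ ‖Complex.sin z‖ ∧
      ‖Complex.sin z‖ ≤ Real.sinh (‖z‖) := by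
  set r := ‖z‖ with hr
  set a := |z.re| with ha
  set b := |z.im| with hb
  have ha0 : 0 ≤ a := abs_nonneg _
  have hb0 : 0 ≤ b := abs_nonneg _
  have hr0 : 0 ≤ r := norm_nonneg z
  have hr2 : r ^ 2 = a ^ 2 + b ^ 2 := by
    rw [hr, Complex.sq_norm, Complex.normSq_apply, ha, hb, sq_abs, sq_abs, sq, sq]
  have har : a ≤ r := by nlinarith
  have hbr : b ≤ r := by nlinarith
  have hsq := abs_sin_sq z
  have hsinsq : Real.sin z.re ^ 2 = Real.sin a ^ 2 := by
    rcases abs_cases z.re with ⟨h, _⟩ | ⟨h, _⟩ <;> rw [ha, h] <;> simp [Real.sin_neg]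
  have hsinhsq : Real.sinh z.im ^ 2 = Real.sinh b ^ 2 := by
    rcases abs_cases z.im with ⟨h, _⟩ | ⟨h, _⟩ <;> rw [hb, h] <;> simp [Real.sinh_neg]
  rw [hsinsq, hsinhsq] at hsq
  have hbsinh : b ≤ Real.sinh b := (Real.self_le_sinh_iff).2 hb0
  have hb2sinh : b ^ 2 ≤ Real.sinh b ^ 2 := by nlinarith
  constructor
  · -- lower bound
    have hid : Real.sin (r + a) * Real.sin (r - a) = Real.sin r ^ 2 - Real.sin a ^ 2 := by
      rw [Real.sin_add, Real.sin_sub]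
      have h1 := Real.sin_sq_add_cos_sq r
      have h2 := Real.sin_sq_add_cos_sq a
      nlinarith
    have hb2 : b ^ 2 = (r + a) * (r - a) := by linear_combination -hr2
    have hs2' : |Real.sin (r - a)| ≤ r - a := by
      have h3 := Real.abs_sin_le_abs (x := r - a)
      rwa [abs_of_nonneg (by linarith : (0:ℝ) ≤ r - a)] at h3
    have hs1 : |Real.sin (r + a)| ≤ 1 := Real.abs_sin_le_one _
    have hs1' : |Real.sin (r + a)| ≤ r + a := by
      have h4 := Real.abs_sin_le_abs (x := r + a)
      rwa [abs_of_nonneg (by linarith : (0:ℝ) ≤ r + a)] at h4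
    have habs : Real.sin (r + a) * Real.sin (r - a) ≤
        |Real.sin (r + a)| * |Real.sin (r - a)| := by
      rw [← abs_mul]; exact le_abs_self _
    have hprod : Real.sin (r + a) * Real.sin (r - a) ≤ b ^ 2 := by
      rcases le_or_gt (r + a) 1 with h | h
      · have : |Real.sin (r + a)| * |Real.sin (r - a)| ≤ (r + a) * (r - a) :=
          mul_le_mul hs1' hs2' (abs_nonneg _) (by linarith)
        linarith [hb2]
      · have h5 : |Real.sin (r + a)| * |Real.sin (r - a)| ≤ 1 * |Real.sin (r - a)| :=
          mul_le_mul_of_nonneg_right hs1 (abs_nonneg _)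
        have h6 : r - a ≤ (r + a) * (r - a) := by nlinarith
        have := hs2'
        linarith [hb2]
    have key : Real.sin r ^ 2 ≤ Real.sin a ^ 2 + Real.sinh b ^ 2 := by linarith
    have hfin : |Real.sin r| ^ 2 ≤ ‖Complex.sin z‖ ^ 2 := by
      rw [sq_abs, hsq]; linarith
    nlinarith [abs_nonneg (Real.sin r), norm_nonneg (Complex.sin z)]
  · -- upper bound
    have hid : Real.sinh (r + b) * Real.sinh (r - b) = Real.sinh r ^ 2 - Real.sinh b ^ 2 := by
      rw [Real.sinh_add, Real.sinh_sub]
      have h1 := Real.cosh_sq r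
      have h2 := Real.cosh_sq b
      nlinarith
    have h1 : r + b ≤ Real.sinh (r + b) := (Real.self_le_sinh_iff).2 (by linarith)
    have h2 : r - b ≤ Real.sinh (r - b) := (Real.self_le_sinh_iff).2 (by linarith)
    have hsin : Real.sin a ^ 2 ≤ a ^ 2 := by
      have h3 := Real.abs_sin_le_abs (x := a)
      rw [abs_of_nonneg ha0] at h3
      nlinarith [abs_nonneg (Real.sin a), sq_abs (Real.sin a)]
    have ha2 : a ^ 2 = (r + b) * (r - b) := by linear_combination -hr2
    have hge : (r + b) * (r - b) ≤ Real.sinh (r + b) * Real.sinh (r - b) := by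
      apply mul_le_mul h1 h2 (by linarith) (by linarith)
    have key : Real.sin a ^ 2 + Real.sinh b ^ 2 ≤ Real.sinh r ^ 2 := by linarith
    have hfin : ‖Complex.sin z‖ ^ 2 ≤ Real.sinh r ^ 2 := by rw [hsq]; linarith
    have hs : 0 ≤ Real.sinh r := by linarith [hbsinh, Real.self_le_sinh_iff.2 hr0]
    nlinarith [norm_nonneg (Complex.sin z)]
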